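/- Let n = 2 and A = {0,1}, and let P ⊆ 2{0,1}* be a finite maximal joinless code with P ≠ {(ε,ε)}. Then there exists a leaf v = (v_1,v_2) of the interior dag of P, of maximal depth among interior vertices of the P-dag, such that v_+ = {(v_1 0, v_2), (v_1 1, v_2)} or v_+ = {(v_1, v_2 0), (v_1, v_2 1)}, where v_+ = {v·a : a ∈ A_{ε,2}} ∩ P. -/

import Mathlib

namespace BrinThompson

abbrev W (A : Type*) (n : ℕ) : Type _ := Fin n → List A

variable {A : Type*} {n : ℕ}

/-- Coordinatewise concatenation in `nA*`. -/
def cat (u x : W A n) : W A n := fun i => u i ++ x i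

/-- `u ≤_init v` : `u` is an initial factor of `v`. -/
def initLE (u v : W A n) : Prop := ∃ x : W A n, v = cat u x

/-- `w` is the join (least upper bound) of `u` and `v` w.r.t. `≤_init`. -/
def isJoin (u v w : W A n) : Prop :=
  initLE u w ∧ initLE v w ∧ ∀ z : W A n, initLE u z → initLE v z → initLE w z

/-- `u` and `v` have a join. -/
def HasJoin (u v : W A n) : Prop := ∃ w : W A n, isJoin u v w

/-- A joinless code: no two distinct elements have a join. -/
def JoinlessCode (S : Set (W A n)) : Prop :=
  ∀ u ∈ S, ∀ v ∈ S, u ≠ v → ¬ HasJoin u v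

/-- A maximal joinless code: joinless, and every element of `nA*` has a join
with some element of the code. -/
def MaxJoinlessCode (S : Set (W A n)) : Prop :=
  JoinlessCode S ∧ ∀ x : W A n, ∃ p ∈ S, HasJoin x p

/-- The right ideal `C · nA*` generated by `C`. -/
def genIdeal (C : Set (W A n)) : Set (W A n) := {w | ∃ c ∈ C, ∃ x : W A n, w = cat c x}

def IsRightIdeal (R : Set (W A n)) : Prop := genIdeal R = R

/-- An initial factor code: pairwise `≤_init`-incomparable set. -/
def InitFactorCode (S : Set (W A n)) : Prop :=
  ∀ u ∈ S, ∀ v ∈ S, initLE u v → u = v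

/-- `A_{ε,n}`: tuples with one coordinate a single letter and the rest empty. -/
def Aeps (A : Type*) (n : ℕ) : Set (W A n) :=
  {w | ∃ i : Fin n, ∃ a : A, w i = [a] ∧ ∀ j : Fin n, j ≠ i → w j = []}

/-- `(ε)^n`, the tuple of empty strings. -/
def epsn (A : Type*) (n : ℕ) : W A n := fun _ => []

/-- `nA^ω`: `n`-tuples of one-sided infinite sequences over `A`. -/
abbrev Winf (A : Type*) (n : ℕ) : Type _ := Fin n → ℕ → A

/-- Concatenation of a finite tuple `p ∈ nA*` with an infinite tuple `u ∈ nA^ω`. -/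
def catInf (p : W A n) (u : Winf A n) : Winf A n :=
  fun i k => if h : k < (p i).length then (p i).get ⟨k, h⟩ else u i (k - (p i).length)

/-- `v` is an interior vertex of the `P`-dag: a strict initial factor of
some element of `P`. -/
def Interior (P : Set (W A n)) (v : W A n) : Prop := ∃ p ∈ P, initLE v p ∧ v ≠ p

/-- The child of `v` in direction `i`, extended by letter `a`. -/
def child (v : W A n) (i : Fin n) (a : A) : W A n := Function.update v i (v i ++ [a])

/-- A leaf of the interior dag of `P`: an interior vertex none of whose
children is interior. -/
def InteriorLeaf (P : Set (W A n)) (v : W A n) : Prop :=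
  Interior P v ∧ ∀ (i : Fin n) (a : A), ¬ Interior P (child v i a)

/-- `v_+ = (v · A_{ε,n}) ∩ P`, the set of children of `v` belonging to `P`. -/
def vplus (P : Set (W A n)) (v : W A n) : Set (W A n) :=
  {w | (∃ (i : Fin n) (a : A), w = child v i a) ∧ w ∈ P}

/-- The depth of a vertex: the sum of the coordinate lengths. -/
def depth (v : W A n) : ℕ := ∑ i, (v i).length

/-- One-step restriction of `P` at `(p, i)`. -/
def oneStep (P : Set (W A n)) (p : W A n) (i : Fin n) : Set (W A n) :=
  (P \ {p}) ∪ {w | ∃ a : A, w = child p i a}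

/-- One step in a sequence of one-step restrictions. -/
def RestrStep (P Q : Set (W A n)) : Prop := ∃ p ∈ P, ∃ i : Fin n, Q = oneStep P p i

/-- The box code `A^{k_1} × … × A^{k_n}`. -/
def box (A : Type*) {n : ℕ} (k : Fin n → ℕ) : Set (W A n) :=
  {w | ∀ i : Fin n, (w i).length = k i}

/-- Elementwise join `P ∨ Q` of two sets, ranging over the joins that exist. -/
def setJoin (P Q : Set (W A n)) : Set (W A n) :=
  {w | ∃ p ∈ P, ∃ q ∈ Q, isJoin p q w}

/-- `ℓ(S)`: the maximum coordinate length occurring in `S`. -/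
noncomputable def ell (S : Set (W A n)) : ℕ :=
  sSup {m | ∃ z ∈ S, ∃ i : Fin n, (z i).length = m}

/-- An element of `n RI^fin_A`: an injective right ideal morphism of `nA*`
whose domain code and image code are finite maximal joinless codes.
`toFun` is a total function whose values outside `Dom` are irrelevant. -/
structure RIMfin (A : Type*) (n : ℕ) where
  Dom : Set (W A n)
  toFun : W A n → W A n
  domC : Set (W A n)
  imC : Set (W A n)
  ideal : IsRightIdeal Dom
  morph : ∀ x ∈ Dom, ∀ w : W A n, toFun (cat x w) = cat (toFun x) w
  inj : Set.InjOn toFun Dom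
  domC_gen : genIdeal domC = Dom
  imC_gen : genIdeal imC = toFun '' Dom
  domC_fin : domC.Finite
  domC_max : MaxJoinlessCode domC
  imC_fin : imC.Finite
  imC_max : MaxJoinlessCode imC

/-- `ℓ(f) = max{ℓ(z) : z ∈ domC(f) ∪ imC(f)}`. -/
noncomputable def ellF (F : RIMfin A n) : ℕ := ell (F.domC ∪ F.imC)

/-- `G` extends `F` (as partial functions). -/
def Extends (F G : RIMfin A n) : Prop :=
  F.Dom ⊆ G.Dom ∧ ∀ x ∈ F.Dom, G.toFun x = F.toFun x

/-- `F` and `G` are equal as partial functions. -/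
def EquivRIM (F G : RIMfin A n) : Prop :=
  F.Dom = G.Dom ∧ ∀ x ∈ F.Dom, F.toFun x = G.toFun x

/-- `G` is a maximal extension of `F` in `n RI^fin_A`. -/
def MaxExtension (F G : RIMfin A n) : Prop :=
  Extends F G ∧ ∀ H : RIMfin A n, Extends G H → EquivRIM G H




lemma initLE_iff {u v : W A n} : initLE u v ↔ ∀ i, u i <+: v i := by
  constructor
  · rintro ⟨x, rfl⟩ i; exact ⟨x i, rfl⟩
  · intro h
    refine ⟨fun i => (h i).choose, funext fun i => ?_⟩
    exact ((h i).choose_spec).symm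

lemma hasJoin_iff {u v : W A n} : HasJoin u v ↔ ∀ i, u i <+: v i ∨ v i <+: u i := by
  constructor
  · rintro ⟨w, hu, hv, -⟩ i
    exact List.prefix_or_prefix_of_prefix (initLE_iff.mp hu i) (initLE_iff.mp hv i)
  · intro h
    refine ⟨fun i => if (u i).length ≤ (v i).length then v i else u i, ?_, ?_, ?_⟩
    · rw [initLE_iff]; intro i
      split_ifs with hle
      · rcases h i with h' | h'
        · exact h'
        · rw [h'.eq_of_length_le hle]
      · exact List.prefix_rfl
    · rw [initLE_iff]; intro i
      split_ifs with hle
      · exact List.prefix_rfl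
      · rcases h i with h' | h'
        · exact absurd h'.length_le hle
        · exact h'
    · intro z hu hv
      rw [initLE_iff] at hu hv ⊢
      intro i
      split_ifs with hle
      · exact hv i
      · exact hu i

lemma joinless_eq {P : Set (W A n)} (hP : JoinlessCode P) {u v : W A n}
    (hu : u ∈ P) (hv : v ∈ P) (h : ∀ i, u i <+: v i ∨ v i <+: u i) : u = v := by
  by_contra hne
  exact hP u hu v hv hne (hasJoin_iff.mpr h)

lemma child_apply_same (v : W A n) (i : Fin n) (a : A) : child v i a i = v i ++ [a] := by
  simp [child]

lemma child_apply_ne (v : W A n) {i k : Fin n} (a : A) (h : k ≠ i) : child v i a k = v k := by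
  simp [child, Function.update_of_ne h]

lemma fin2_eq_or : ∀ (i j k : Fin 2), i ≠ j → k = i ∨ k = j := by decide

lemma depth_pair {A : Type*} {w : W A 2} {i j : Fin 2} (hij : i ≠ j) :
    depth w = (w i).length + (w j).length := by
  fin_cases i <;> fin_cases j <;> simp_all [depth, Fin.sum_univ_two] <;> omega

lemma depth_child {A : Type*} (v : W A 2) (i : Fin 2) (a : A) :
    depth (child v i a) = depth v + 1 := by
  fin_cases i <;>
    simp [depth, Fin.sum_univ_two, child_apply_same, child, Function.update] <;> omega

lemma depth_le_of_initLE {u v : W A n} (h : initLE u v) : depth u ≤ depth v := by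
  have h' := initLE_iff.mp h
  exact Finset.sum_le_sum fun k _ => (h' k).length_le

lemma exists_child_initLE {v p : W A n} (h : initLE v p) (hne : v ≠ p) :
    ∃ (i : Fin n) (a : A), initLE (child v i a) p := by
  have hpre := initLE_iff.mp h
  have hex : ∃ i, v i ≠ p i := by
    by_contra hc; push_neg at hc; exact hne (funext hc)
  obtain ⟨i, hi⟩ := hex
  have hlt : (v i).length < (p i).length :=
    lt_of_le_of_ne (hpre i).length_le (fun e => hi ((hpre i).eq_of_length e))
  refine ⟨i, (p i).get ⟨(v i).length, hlt⟩, initLE_iff.mpr fun k => ?_⟩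
  by_cases hk : k = i
  · subst hk
    rw [child_apply_same]
    have ht : v k = (p k).take (v k).length := List.prefix_iff_eq_take.mp (hpre k)
    have key : (p k).take ((v k).length + 1) = v k ++ [(p k).get ⟨(v k).length, hlt⟩] := by
      rw [← List.take_concat_get hlt, ← ht]
      simp [List.concat_eq_append]
    rw [← key]
    exact List.take_prefix _ _
  · rw [child_apply_ne v _ hk]; exact hpre k

lemma prefix_dropLast {l m : List A} (h : l <+: m) (hne : l ≠ m) : l <+: m.dropLast := by
  have hlt : l.length < m.length := lt_of_le_of_ne h.length_le (fun e => hne (h.eq_of_length e))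
  rw [List.dropLast_eq_take]
  exact List.prefix_take_iff.mpr ⟨h, by omega⟩


lemma ext_lemma {P : Set (W Bool 2)} (hmax : MaxJoinlessCode P) {v : W Bool 2}
    {i j : Fin 2} (hij : i ≠ j) {a : Bool}
    (hbound : ∀ w, Interior P w → depth w ≤ depth v)
    (hc0 : child v i a ∈ P) (hc' : child v i (!a) ∉ P) :
    ∃ q ∈ P, (v i ++ [!a]) <+: q i ∧ q j <+: v j ∧ q j ≠ v j := by
  obtain ⟨q, hqP, hjoin⟩ := hmax.2 (child v i (!a))
  have hcomp := hasJoin_iff.mp hjoin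
  have hci := hcomp i
  rw [child_apply_same] at hci
  have hcj := hcomp j
  rw [child_apply_ne v _ hij.symm] at hcj
  have hmain : (v i ++ [!a]) <+: q i := by
    rcases hci with hle | hge
    · exact hle
    · by_cases hqi : q i = v i ++ [!a]
      · rw [hqi]
      · exfalso
        have hqvi : q i <+: v i := by
          have h2 := prefix_dropLast hge hqi
          rwa [List.dropLast_concat] at h2
        have heq : q = child v i a := by
          refine joinless_eq hmax.1 hqP hc0 (fun k => ?_)
          rcases fin2_eq_or i j k hij with hk2 | hk2 <;> subst hk2
          · rw [child_apply_same]
            exact Or.inl (hqvi.trans (List.prefix_append _ _))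
          · rw [child_apply_ne v a hij.symm]
            exact hcj.symm
        have h3 := congrFun heq i
        rw [child_apply_same] at h3
        have h4 := congrArg List.length h3
        have h5 := hqvi.length_le
        simp at h4
        omega
  have hnot : ¬ (v j <+: q j) := by
    intro hjj
    have hinit : initLE (child v i (!a)) q := initLE_iff.mpr (fun k => by
      rcases fin2_eq_or i j k hij with hk2 | hk2 <;> subst hk2
      · rw [child_apply_same]; exact hmain
      · rw [child_apply_ne v _ hij.symm]; exact hjj)
    by_cases heq : child v i (!a) = q
    · exact hc' (heq ▸ hqP)
    · have hI : Interior P (child v i (!a)) := ⟨q, hqP, hinit, heq⟩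
      have h6 := hbound _ hI
      rw [depth_child] at h6
      omega
  have hqj : q j <+: v j := by
    rcases hcj with h | h
    · exact absurd h hnot
    · exact h
  exact ⟨q, hqP, hmain, hqj, fun e => hnot (by rw [e])⟩

lemma good_lemma {P : Set (W Bool 2)} (hmax : MaxJoinlessCode P) {v : W Bool 2}
    {i j : Fin 2} (hij : i ≠ j) {a : Bool}
    (hint : Interior P v)
    (hbound : ∀ w, Interior P w → depth w ≤ depth v)
    (h0 : child v i a ∈ P) (h1 : child v i (!a) ∈ P) :
    InteriorLeaf P v ∧ (∀ w, Interior P w → depth w ≤ depth v) ∧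
      vplus P v = {w | ∃ b : Bool, w = child v i b} := by
  refine ⟨⟨hint, fun k b hk => ?_⟩, hbound, ?_⟩
  · have h2 := hbound _ hk
    rw [depth_child] at h2
    omega
  · ext w
    constructor
    · rintro ⟨⟨k, b, rfl⟩, hwP⟩
      by_cases hki : k = i
      · subst hki; exact ⟨b, rfl⟩
      · exfalso
        have heq : child v i a = child v k b := by
          refine joinless_eq hmax.1 h0 hwP (fun m => ?_)
          by_cases hmi : m = i
          · subst hmi
            rw [child_apply_same, child_apply_ne v b (Ne.symm hki)]
            exact Or.inr (List.prefix_append _ _)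
          · rw [child_apply_ne v a hmi]
            by_cases hmk : m = k
            · subst hmk
              rw [child_apply_same]
              exact Or.inl (List.prefix_append _ _)
            · rw [child_apply_ne v b hmk]
              exact Or.inl List.prefix_rfl
        have h2 := congrFun heq i
        rw [child_apply_same, child_apply_ne v b (Ne.symm hki)] at h2
        have h3 := congrArg List.length h2
        simp at h3
    · rintro ⟨b, rfl⟩
      refine ⟨⟨i, b, rfl⟩, ?_⟩
      by_cases hb : b = a
      · rw [hb]; exact h0
      · have hb2 : b = !a := by cases a <;> cases b <;> simp_all
        rw [hb2]; exact h1

lemma main_aux {P : Set (W Bool 2)} (hmax : MaxJoinlessCode P) {v : W Bool 2}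
    {i j : Fin 2} (hij : i ≠ j) {a : Bool}
    (hint : Interior P v)
    (hbound : ∀ w, Interior P w → depth w ≤ depth v)
    (hc0 : child v i a ∈ P) :
    ∃ u : W Bool 2, InteriorLeaf P u ∧ (∀ w, Interior P w → depth w ≤ depth u) ∧
      (vplus P u = {w | ∃ b : Bool, w = child u i b} ∨
       vplus P u = {w | ∃ b : Bool, w = child u j b}) := by
  by_cases hc' : child v i (!a) ∈ P
  · obtain ⟨hl, hb, he⟩ := good_lemma hmax hij hint hbound hc0 hc'
    exact ⟨v, hl, hb, Or.inl he⟩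
  · obtain ⟨q, hqP, hqi, hqj, hqjne⟩ := ext_lemma hmax hij hbound hc0 hc'
    have hvjne : v j ≠ [] := by
      intro h
      rw [h] at hqj hqjne
      exact hqjne (List.prefix_nil.mp hqj)
    have hvjlen : (v j).length ≠ 0 := fun h0 => hvjne (List.length_eq_zero_iff.mp h0)
    set u1 := (v j).dropLast with hu1
    set c := (v j).getLast hvjne with hc
    have hsplit : u1 ++ [c] = v j := List.dropLast_append_getLast hvjne
    set v' := Function.update (child v i a) j u1 with hv'
    have hv'j : v' j = u1 := Function.update_self _ _ _
    have hv'i : v' i = v i ++ [a] := by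
      rw [hv', Function.update_of_ne hij, child_apply_same]
    have hchild : child v' j c = child v i a := by
      funext k
      rcases fin2_eq_or i j k hij with hk2 | hk2 <;> subst hk2
      · rw [child_apply_ne v' c hij, hv'i, child_apply_same]
      · rw [child_apply_same, hv'j, hsplit, child_apply_ne v a hij.symm]
    have hdepth : depth v' = depth v := by
      rw [depth_pair hij (w := v'), depth_pair hij (w := v), hv'i, hv'j, hu1]
      simp only [List.length_append, List.length_dropLast, List.length_singleton]
      omega
    have hint' : Interior P v' := by
      refine ⟨child v i a, hc0, initLE_iff.mpr (fun k => ?_), ?_⟩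
      · rcases fin2_eq_or i j k hij with hk2 | hk2 <;> subst hk2
        · rw [hv'i, child_apply_same]
        · rw [hv'j, child_apply_ne v a hij.symm]
          exact List.dropLast_prefix _
      · intro h
        have h2 := congrFun h j
        rw [hv'j, child_apply_ne v a hij.symm] at h2
        have hlen := congrArg List.length h2
        rw [hu1, List.length_dropLast] at hlen
        omega
    have hbound' : ∀ w, Interior P w → depth w ≤ depth v' := by
      intro w hw
      rw [hdepth]
      exact hbound w hw
    have hc0' : child v' j c ∈ P := by rw [hchild]; exact hc0
    by_cases hs : child v' j (!c) ∈ P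
    · obtain ⟨hl, hb, he⟩ := good_lemma hmax hij.symm hint' hbound' hc0' hs
      exact ⟨v', hl, hb, Or.inr he⟩
    · exfalso
      obtain ⟨q', hq'P, hq'j, hq'i, hq'ine⟩ := ext_lemma hmax hij.symm hbound' hc0' hs
      rw [hv'j] at hq'j
      have hq'vi : q' i <+: v i := by
        have h2 := prefix_dropLast hq'i hq'ine
        rwa [hv'i, List.dropLast_concat] at h2
      have hqju : q j <+: u1 := prefix_dropLast hqj hqjne
      have heq : q = q' := by
        refine joinless_eq hmax.1 hqP hq'P (fun k => ?_)
        rcases fin2_eq_or i j k hij with hk2 | hk2 <;> subst hk2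
        · exact Or.inr (hq'vi.trans ((List.prefix_append _ _).trans hqi))
        · exact Or.inl ((hqju.trans (List.prefix_append _ _)).trans hq'j)
      have hlen1 : (v i).length + 1 ≤ (q i).length := by
        have h2 := hqi.length_le
        simpa using h2
      have hlen2 : (q' i).length ≤ (v i).length := hq'vi.length_le
      rw [heq] at hlen1
      omega


/-- For `n = 2`, `A = {0,1}`: every finite maximal joinless code
`P ≠ {(ε,ε)}` has a maximum-depth leaf `v` of its interior dag whose set
`v_+` equals the full set of children of `v` in one of the two directions. -/
theorem exists_maxDepth_interiorLeaf_full {P : Set (W Bool 2)}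
    (hfin : P.Finite) (hmax : MaxJoinlessCode P) (hne : P ≠ {epsn Bool 2}) :
    ∃ v : W Bool 2, InteriorLeaf P v ∧
      (∀ w : W Bool 2, Interior P w → depth w ≤ depth v) ∧
      (vplus P v = {w | ∃ a : Bool, w = child v (0 : Fin 2) a} ∨
       vplus P v = {w | ∃ a : Bool, w = child v (1 : Fin 2) a}) := by

  obtain ⟨p0, hp0, -⟩ := hmax.2 (epsn Bool 2)
  have hex : ∃ p ∈ P, p ≠ epsn Bool 2 := by
    by_contra hc
    push_neg at hc
    exact hne (Set.eq_singleton_iff_unique_mem.mpr ⟨hc p0 hp0 ▸ hp0, hc⟩)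
  obtain ⟨p1, hp1, hp1ne⟩ := hex
  have hIe : Interior P (epsn Bool 2) :=
    ⟨p1, hp1, initLE_iff.mpr fun k => List.nil_prefix, fun e => hp1ne e.symm⟩
  set S : Set ℕ := {d | ∃ w, Interior P w ∧ depth w = d} with hS
  have hSne : S.Nonempty := ⟨depth (epsn Bool 2), ⟨_, hIe, rfl⟩⟩
  have hbddP : BddAbove (depth '' P) := (hfin.image _).bddAbove
  have hSbdd : BddAbove S := by
    refine ⟨sSup (depth '' P), ?_⟩
    rintro d ⟨w, ⟨p, hpP, hwp, -⟩, rfl⟩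
    exact (depth_le_of_initLE hwp).trans (le_csSup hbddP ⟨p, hpP, rfl⟩)
  obtain ⟨v, hvI, hvD⟩ := Nat.sSup_mem hSne hSbdd
  have hbound : ∀ w, Interior P w → depth w ≤ depth v := by
    intro w hw
    calc depth w ≤ sSup S := le_csSup hSbdd ⟨w, hw, rfl⟩
    _ = depth v := hvD.symm
  obtain ⟨p, hpP, hvp, hvpne⟩ := hvI
  have hvI' : Interior P v := ⟨p, hpP, hvp, hvpne⟩
  obtain ⟨i, a, hch⟩ := exists_child_initLE hvp hvpne
  have hcP : child v i a ∈ P := by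
    by_cases h : child v i a = p
    · rw [h]; exact hpP
    · exfalso
      have h2 := hbound _ ⟨p, hpP, hch, h⟩
      rw [depth_child] at h2
      omega
  have hi2 : ∀ k : Fin 2, k = 0 ∨ k = 1 := by decide
  rcases hi2 i with rfl | rfl
  · exact main_aux hmax (show (0 : Fin 2) ≠ 1 by decide) hvI' hbound hcP
  · obtain ⟨u, h1, h2, h3⟩ :=
      main_aux hmax (show (1 : Fin 2) ≠ 0 by decide) hvI' hbound hcP
    exact ⟨u, h1, h2, h3.symm⟩


end BrinThompson
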